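/- Let E be a real inner product space and L : E → ℝ a differentiable function whose gradient ∇L is Lipschitz with constant l ≥ 0 and satisfies ‖∇L(x)‖ ≤ δ for all x ∈ E. Let ε, λ, ρ ≥ 0, let n ∈ E, and suppose Θ_t = Θ_{t−1} − ε·(∇L(Θ_{t−1}) + λ·∇L(Θ_{t−1} + n)). Then |sup_{‖m‖ ≤ ρ} L(Θ_t + m) − L(Θ_{t−1})| ≤ ρδ + (l/2)ρ² + ε(1 + λ)δ² + (l/2)ε²(1 + λ)²δ². -/

import Mathlib

open InnerProductSpace intervalIntegral

lemma smooth_bound {E : Type*} [NormedAddCommGroup E] [InnerProductSpace ℝ E]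
    [CompleteSpace E] (L : E → ℝ) (g : E → E) (hg : ∀ x, HasGradientAt L (g x) x)
    (l : ℝ) (hl : 0 ≤ l) (hlip : ∀ x y, ‖g x - g y‖ ≤ l * ‖x - y‖)
    (x v : E) : |L (x + v) - L x - inner ℝ (g x) v| ≤ l / 2 * ‖v‖ ^ 2 := by
  have hgc : Continuous g := by
    have : LipschitzWith ⟨l, hl⟩ g :=
      LipschitzWith.of_dist_le_mul (fun a b => by
        rw [dist_eq_norm, dist_eq_norm]; exact hlip a b)
    exact this.continuous
  set ψ : ℝ → ℝ := fun t => inner ℝ (g (x + t • v)) v with hψ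
  have hψc : Continuous ψ := by
    apply Continuous.inner (hgc.comp (by continuity)) continuous_const
  have hderiv : ∀ t : ℝ, HasDerivAt (fun s : ℝ => L (x + s • v)) (ψ t) t := by
    intro t
    have h1 : HasDerivAt (fun s : ℝ => x + s • v) v t := by
      simpa using (hasDerivAt_id t).smul_const v |>.const_add x
    have h2 := (hg (x + t • v)).hasFDerivAt.comp_hasDerivAt t h1
    simpa [ψ, toDual_apply_apply, Function.comp_def] using h2
  have hFT : ∫ t in (0:ℝ)..1, ψ t = L (x + v) - L x := by
    have := intervalIntegral.integral_eq_sub_of_hasDerivAt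
      (f := fun s : ℝ => L (x + s • v)) (f' := ψ)
      (fun t _ => hderiv t) (hψc.intervalIntegrable 0 1)
    simpa using this
  have hψ0 : ψ 0 = inner ℝ (g x) v := by simp [ψ]
  have key : L (x + v) - L x - inner ℝ (g x) v = ∫ t in (0:ℝ)..1, (ψ t - ψ 0) := by
    rw [intervalIntegral.integral_sub (hψc.intervalIntegrable 0 1) (intervalIntegrable_const),
      hFT, hψ0]
    simp
  rw [key]
  have hb : ∀ t ∈ Set.uIcc (0:ℝ) 1, |ψ t - ψ 0| ≤ l * ‖v‖^2 * t := by
    intro t ht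
    rw [Set.uIcc_of_le (by norm_num)] at ht
    have h1 : ψ t - ψ 0 = inner ℝ (g (x + t • v) - g x) v := by
      simp [ψ, inner_sub_left]
    rw [h1]
    calc |inner ℝ (g (x + t • v) - g x) v| ≤ ‖g (x + t • v) - g x‖ * ‖v‖ :=
          abs_real_inner_le_norm _ _
      _ ≤ l * ‖x + t • v - x‖ * ‖v‖ := by
          gcongr; exact hlip _ _
      _ = l * (|t| * ‖v‖) * ‖v‖ := by rw [add_sub_cancel_left, norm_smul, Real.norm_eq_abs]
      _ = l * ‖v‖^2 * |t| := by ring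
      _ = l * ‖v‖^2 * t := by rw [abs_of_nonneg ht.1]
  have hI : ∫ t in (0:ℝ)..1, l * ‖v‖^2 * t = l / 2 * ‖v‖ ^ 2 := by
    rw [intervalIntegral.integral_const_mul, integral_id]; ring
  calc |∫ t in (0:ℝ)..1, (ψ t - ψ 0)| ≤ |∫ t in (0:ℝ)..1, l * ‖v‖^2 * t| := by
        rw [← Real.norm_eq_abs (∫ t in (0:ℝ)..1, (ψ t - ψ 0))]
        apply intervalIntegral.norm_integral_le_abs_of_norm_le
        · filter_upwards [MeasureTheory.ae_restrict_mem measurableSet_Ioc] with t ht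
          rw [Set.uIoc_of_le (by norm_num : (0:ℝ) ≤ 1)] at ht
          exact hb t (by rw [Set.uIcc_of_le (by norm_num)]; exact Set.mem_Icc_of_Ioc ht)
        · exact (continuous_const.mul continuous_id).intervalIntegrable 0 1
    _ = l / 2 * ‖v‖ ^ 2 := by
        rw [hI, abs_of_nonneg (by positivity)]


/-- **Theorem 2 (exact form).** If `L` is differentiable with `l`-Lipschitz gradient `g`
bounded by `δ`, and `Θₜ` is obtained from `Θₜ₋₁` by the APP update with learning rate `ε`,
regularization `λ` and perturbation `n`, then the gap between the maximally adversarially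
perturbed loss at `Θₜ` (over the ball of radius `ρ`) and the loss at `Θₜ₋₁` is at most
`ρδ + (l/2)ρ² + ε(1+λ)δ² + (l/2)ε²(1+λ)²δ²`. -/
theorem app_adv_loss_gap {E : Type*} [NormedAddCommGroup E] [InnerProductSpace ℝ E]
    [CompleteSpace E] (L : E → ℝ) (g : E → E) (hg : ∀ x, HasGradientAt L (g x) x)
    (l δ : ℝ) (hl : 0 ≤ l) (hlip : ∀ x y, ‖g x - g y‖ ≤ l * ‖x - y‖)
    (hδ : ∀ x, ‖g x‖ ≤ δ)
    (ε lam ρ : ℝ) (hε : 0 ≤ ε) (hlam : 0 ≤ lam) (hρ : 0 ≤ ρ)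
    (n Θprev Θt : E) (hupd : Θt = Θprev - ε • (g Θprev + lam • g (Θprev + n))) :
    |sSup ((fun m => L (Θt + m)) '' Metric.closedBall (0 : E) ρ) - L Θprev|
      ≤ ρ * δ + l / 2 * ρ ^ 2 + ε * (1 + lam) * δ ^ 2
        + l / 2 * ε ^ 2 * (1 + lam) ^ 2 * δ ^ 2 := by
  have hδ0 : 0 ≤ δ := (norm_nonneg _).trans (hδ Θprev)
  set B : ℝ := ρ * δ + l / 2 * ρ ^ 2 + ε * (1 + lam) * δ ^ 2
        + l / 2 * ε ^ 2 * (1 + lam) ^ 2 * δ ^ 2 with hB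
  have step : ∀ x v : E, |L (x + v) - L x| ≤ δ * ‖v‖ + l / 2 * ‖v‖ ^ 2 := by
    intro x v
    have h1 := smooth_bound L g hg l hl hlip x v
    have h2 : |inner ℝ (g x) v| ≤ δ * ‖v‖ :=
      (abs_real_inner_le_norm _ _).trans (by gcongr; exact hδ x)
    have h3 : |L (x + v) - L x| ≤ |L (x + v) - L x - inner ℝ (g x) v| + |inner ℝ (g x) v| := by
      have := abs_add_le (L (x + v) - L x - inner ℝ (g x) v) (inner ℝ (g x) v)
      simpa using this
    linarith
  have hd : ‖Θt - Θprev‖ ≤ ε * (1 + lam) * δ := by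
    rw [hupd]
    have : Θprev - ε • (g Θprev + lam • g (Θprev + n)) - Θprev
        = -(ε • (g Θprev + lam • g (Θprev + n))) := by abel
    rw [this, norm_neg, norm_smul, Real.norm_eq_abs, abs_of_nonneg hε]
    calc ε * ‖g Θprev + lam • g (Θprev + n)‖
        ≤ ε * (‖g Θprev‖ + ‖lam • g (Θprev + n)‖) := by gcongr; exact norm_add_le _ _
      _ ≤ ε * (δ + lam * δ) := by
          rw [norm_smul, Real.norm_eq_abs, abs_of_nonneg hlam]
          gcongr
          · exact hδ _
          · exact hδ _
      _ = ε * (1 + lam) * δ := by ring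
  have hmem : ∀ m : E, ‖m‖ ≤ ρ → |L (Θt + m) - L Θprev| ≤ B := by
    intro m hm
    have h1 : |L (Θt + m) - L Θt| ≤ δ * ρ + l / 2 * ρ ^ 2 := by
      refine (step Θt m).trans ?_
      gcongr
    have h2 : |L Θt - L Θprev| ≤ δ * (ε * (1 + lam) * δ)
        + l / 2 * (ε * (1 + lam) * δ) ^ 2 := by
      have := step Θprev (Θt - Θprev)
      rw [add_sub_cancel] at this
      refine this.trans ?_
      gcongr
    have h3 : |L (Θt + m) - L Θprev| ≤ |L (Θt + m) - L Θt| + |L Θt - L Θprev| := by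
      have := abs_add_le (L (Θt + m) - L Θt) (L Θt - L Θprev)
      simpa using this
    have : δ * (ε * (1 + lam) * δ) + l / 2 * (ε * (1 + lam) * δ) ^ 2
        = ε * (1 + lam) * δ ^ 2 + l / 2 * ε ^ 2 * (1 + lam) ^ 2 * δ ^ 2 := by ring
    rw [this] at h2
    rw [hB]
    linarith [mul_comm δ ρ ▸ h1]
  set S := (fun m => L (Θt + m)) '' Metric.closedBall (0 : E) ρ with hS
  have h0mem : L Θt ∈ S := by
    refine ⟨0, Metric.mem_closedBall_self hρ, by simp⟩
  have hbdd : BddAbove S := by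
    refine ⟨L Θprev + B, ?_⟩
    rintro y ⟨m, hm, rfl⟩
    have := (abs_le.mp (hmem m (by simpa using Metric.mem_closedBall.mp hm))).2
    linarith
  have hub : sSup S ≤ L Θprev + B := by
    refine csSup_le ⟨_, h0mem⟩ ?_
    rintro y ⟨m, hm, rfl⟩
    have := (abs_le.mp (hmem m (by simpa using Metric.mem_closedBall.mp hm))).2
    linarith
  have hlb : L Θprev - B ≤ sSup S := by
    have h1 : L Θt ≤ sSup S := le_csSup hbdd h0mem
    have h2 := (abs_le.mp (hmem 0 (by simpa using hρ))).1
    simp only [add_zero] at h2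
    linarith
  exact abs_le.mpr ⟨by linarith, by linarith⟩
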